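/- arXiv:1605.02643 — 2 statements merged into one kernel-verified Lean document; each statement's English description precedes it below -/
import Mathlib

section
/- If σ₁, ..., σ_N are i.i.d. geometric random variables (taking values in {1,2,3,...} with P(σ = k) = p(1-p)^{k-1}), then N·(min(σ₁,...,σ_N) − 1) + min{n ∈ {1,...,N} : σ_n = min(σ₁,...,σ_N)} has the same distribution as σ₁. -/
open MeasureTheory ProbabilityTheory

/-- If `σ 1, ..., σ N` are i.i.d. geometric random variables on `{1,2,...}` with
`P(σ = k) = p (1-p)^(k-1)`, then `N·(min σ − 1) + (smallest 1-based index attaining the min)`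
has the same distribution as `σ 1`. -/
theorem parRep_geometric_min
    {Ω : Type*} [MeasureSpace Ω] [IsProbabilityMeasure (ℙ : Measure Ω)]
    (N : ℕ) (hN : 0 < N) (p : ℝ) (hp0 : 0 < p) (hp1 : p < 1)
    (σ : Fin N → Ω → ℕ)
    (hmeas : ∀ i, Measurable (σ i))
    (hpos : ∀ i ω, 1 ≤ σ i ω)
    (hindep : iIndepFun σ ℙ)
    (hgeom : ∀ i, ∀ k : ℕ, 1 ≤ k →
      ℙ {ω | σ i ω = k} = ENNReal.ofReal (p * (1 - p) ^ (k - 1))) :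
    ∀ k : ℕ,
      ℙ {ω | N * ((⨅ i, σ i ω) - 1)
          + (sInf {n : ℕ | ∃ h : n < N, σ ⟨n, h⟩ ω = ⨅ i, σ i ω} + 1) = k}
        = ℙ {ω | σ ⟨0, hN⟩ ω = k} := by
  haveI : Nonempty (Fin N) := Fin.pos_iff_nonempty.mp hN
  have hq0 : (0:ℝ) ≤ 1 - p := by linarith
  -- tail probabilities
  have tail : ∀ i : Fin N, ∀ m : ℕ, ℙ {ω | m + 1 ≤ σ i ω} = ENNReal.ofReal ((1-p)^m) := by
    intro i m
    induction m with
    | zero =>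
      have h1 : {ω | 0 + 1 ≤ σ i ω} = Set.univ := by
        ext ω; simp [hpos i ω]
      rw [h1]; simp
    | succ m ih =>
      have hsplit : {ω | m + 1 ≤ σ i ω} = {ω | σ i ω = m + 1} ∪ {ω | m + 1 + 1 ≤ σ i ω} := by
        ext ω; simp only [Set.mem_setOf_eq, Set.mem_union]; omega
      have hdisj : Disjoint {ω | σ i ω = m + 1} {ω | m + 1 + 1 ≤ σ i ω} := by
        rw [Set.disjoint_left]; intro ω h1 h2
        simp only [Set.mem_setOf_eq] at h1 h2; omega
      have hm2 : MeasurableSet {ω | m + 1 + 1 ≤ σ i ω} := hmeas i measurableSet_Ici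
      have key : ℙ {ω | σ i ω = m + 1} + ℙ {ω | m + 1 + 1 ≤ σ i ω}
          = ENNReal.ofReal ((1-p)^m) := by
        rw [← measure_union hdisj hm2, ← hsplit, ih]
      have hval : ℙ {ω | σ i ω = m + 1} = ENNReal.ofReal (p * (1-p)^m) := by
        simpa using hgeom i (m+1) (by omega)
      rw [hval] at key
      have hreal : ENNReal.ofReal ((1-p)^m)
          = ENNReal.ofReal (p * (1-p)^m) + ENNReal.ofReal ((1-p)^(m+1)) := by
        rw [← ENNReal.ofReal_add (by positivity) (by positivity)]
        ring_nf
      rw [hreal] at key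
      exact (ENNReal.add_right_inj ENNReal.ofReal_ne_top).mp key
  intro k
  rcases Nat.eq_zero_or_pos k with hk | hk
  · subst hk
    have h1 : {ω | N * ((⨅ i, σ i ω) - 1)
        + (sInf {n : ℕ | ∃ h : n < N, σ ⟨n, h⟩ ω = ⨅ i, σ i ω} + 1) = 0} = ∅ := by
      ext ω
      simp only [Set.mem_setOf_eq, Set.mem_empty_iff_false, iff_false, Nat.add_eq_zero]
      rintro ⟨-, -, h⟩; exact one_ne_zero h
    have h2 : {ω | σ ⟨0, hN⟩ ω = 0} = ∅ := by
      ext ω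
      simp only [Set.mem_setOf_eq, Set.mem_empty_iff_false, iff_false]
      intro h; have := hpos ⟨0, hN⟩ ω; omega
    rw [h1, h2]
  · set q : ℕ := (k-1)/N with hqdef
    set j : ℕ := (k-1)%N with hjdef
    have hjN : j < N := Nat.mod_lt _ hN
    have hkey : N * q + j = k - 1 := Nat.div_add_mod (k-1) N
    set S : Fin N → Set ℕ := fun i =>
      if (i:ℕ) < j then Set.Ici (q+2) else if (i:ℕ) = j then {q+1} else Set.Ici (q+1) with hSdef
    have hset : {ω | N * ((⨅ i, σ i ω) - 1)
        + (sInf {n : ℕ | ∃ h : n < N, σ ⟨n, h⟩ ω = ⨅ i, σ i ω} + 1) = k}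
        = ⋂ i, σ i ⁻¹' S i := by
      ext ω
      simp only [Set.mem_setOf_eq, Set.mem_iInter, Set.mem_preimage]
      set M := ⨅ i, σ i ω with hMdef
      set T := {n : ℕ | ∃ h : n < N, σ ⟨n, h⟩ ω = M} with hTdef
      have hM1 : 1 ≤ M := le_ciInf fun i => hpos i ω
      have hMle : ∀ i, M ≤ σ i ω := fun i => ciInf_le (OrderBot.bddBelow _) i
      obtain ⟨i0, hi0min⟩ := Finite.exists_min (fun i => σ i ω)
      have hi0 : σ i0 ω = M := le_antisymm (le_ciInf hi0min) (hMle i0)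
      have hTne : T.Nonempty := ⟨(i0 : ℕ), i0.isLt, by rw [Fin.eta]; exact hi0⟩
      obtain ⟨hJN, hJσ⟩ := Nat.sInf_mem hTne
      constructor
      · intro h
        have h' : N * (M - 1) + sInf T = k - 1 := by
          set a := N * (M - 1) with ha; omega
        have hdiv : (k - 1) / N = M - 1 := by
          rw [← h', Nat.mul_add_div hN, Nat.div_eq_of_lt hJN, Nat.add_zero]
        have hmod : (k - 1) % N = sInf T := by
          rw [← h', Nat.mul_add_mod, Nat.mod_eq_of_lt hJN]
        have hMq : M = q + 1 := by omega
        have hJj : sInf T = j := hmod.symm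
        intro i
        simp only [hSdef]
        by_cases hij : (i:ℕ) < j
        · rw [if_pos hij]
          have hne : σ i ω ≠ M := by
            intro hcontra
            have : (i:ℕ) ∈ T := ⟨i.isLt, by rw [Fin.eta]; exact hcontra⟩
            have := Nat.sInf_le this
            omega
          have := hMle i
          simp only [Set.mem_Ici]; omega
        · rw [if_neg hij]
          by_cases hij' : (i:ℕ) = j
          · rw [if_pos hij']
            have hieq : i = ⟨sInf T, hJN⟩ := by
              apply Fin.ext; simp [hij', hJj]
            rw [hieq]
            simp only [Set.mem_singleton_iff]
            rw [hJσ]; exact hMq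
          · rw [if_neg hij']
            have := hMle i
            simp only [Set.mem_Ici]; omega
      · intro h
        have hstar : σ ⟨j, hjN⟩ ω = q + 1 := by
          have := h ⟨j, hjN⟩
          simp only [hSdef] at this
          simp only [lt_irrefl, if_neg (lt_irrefl j), if_pos rfl] at this
          exact this
        have hall : ∀ i, q + 1 ≤ σ i ω := by
          intro i
          have := h i
          simp only [hSdef] at this
          split_ifs at this with h1 h2
          · simp only [Set.mem_Ici] at this; omega
          · simp only [Set.mem_singleton_iff] at this; omega
          · simpa using this
        have hMq : M = q + 1 :=
          le_antisymm (hstar ▸ hMle ⟨j, hjN⟩) (le_ciInf hall)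
        have hjT : j ∈ T := ⟨hjN, by rw [hstar, hMq]⟩
        have hJle : sInf T ≤ j := Nat.sInf_le hjT
        have hJj : sInf T = j := by
          rcases Nat.lt_or_ge (sInf T) j with hlt | hge
          · exfalso
            have := h ⟨sInf T, hJN⟩
            simp only [hSdef] at this
            rw [if_pos hlt] at this
            simp only [Set.mem_Ici] at this
            rw [hJσ, hMq] at this; omega
          · omega
        rw [hMq, hJj]
        simp only [Nat.add_sub_cancel]
        omega
    rw [hset]
    have hiInter : (⋂ i, σ i ⁻¹' S i) = ⋂ i ∈ (Finset.univ : Finset (Fin N)), σ i ⁻¹' S i := by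
      simp
    rw [hiInter, hindep.measure_inter_preimage_eq_mul Finset.univ (fun i _ => trivial)]
    -- compute each factor
    have hfac : ∀ i : Fin N, ℙ (σ i ⁻¹' S i)
        = ENNReal.ofReal ((if (i:ℕ) = j then p else 1) * (1-p)^(if (i:ℕ) < j then q+1 else q)) := by
      intro i
      simp only [hSdef]
      by_cases hij : (i:ℕ) < j
      · have hne : (i:ℕ) ≠ j := Nat.ne_of_lt hij
        rw [if_pos hij, if_neg hne, if_pos hij, one_mul]
        have : σ i ⁻¹' Set.Ici (q+2) = {ω | q + 1 + 1 ≤ σ i ω} := by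
          ext ω; simp only [Set.mem_preimage, Set.mem_Ici, Set.mem_setOf_eq]
        rw [this]; exact tail i (q+1)
      · rw [if_neg hij, if_neg hij]
        by_cases hij' : (i:ℕ) = j
        · rw [if_pos hij', if_pos hij']
          have : σ i ⁻¹' ({q+1} : Set ℕ) = {ω | σ i ω = q + 1} := by
            ext ω; simp
          rw [this]
          simpa using hgeom i (q+1) (Nat.le_add_left 1 q)
        · rw [if_neg hij', if_neg hij', one_mul]
          have : σ i ⁻¹' Set.Ici (q+1) = {ω | q + 1 ≤ σ i ω} := by
            ext ω; simp [Set.mem_Ici]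
          rw [this]; exact tail i q
    calc ∏ i : Fin N, ℙ (σ i ⁻¹' S i)
        = ∏ i : Fin N, ENNReal.ofReal
            ((if (i:ℕ) = j then p else 1) * (1-p)^(if (i:ℕ) < j then q+1 else q)) :=
          Finset.prod_congr rfl fun i _ => hfac i
      _ = ENNReal.ofReal (∏ i : Fin N,
            (if (i:ℕ) = j then p else 1) * (1-p)^(if (i:ℕ) < j then q+1 else q)) := by
          rw [ENNReal.ofReal_prod_of_nonneg]
          intro i _
          have : (0:ℝ) ≤ (if (i:ℕ) = j then p else 1) := by split_ifs <;> [exact hp0.le; norm_num]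
          positivity
      _ = ENNReal.ofReal (p * (1-p)^(k-1)) := by
          congr 1
          rw [Finset.prod_mul_distrib]
          have h1 : (∏ i : Fin N, (if (i:ℕ) = j then p else 1)) = p := by
            have : ∀ i : Fin N, (if (i:ℕ) = j then p else 1)
                = (if i = (⟨j, hjN⟩ : Fin N) then p else 1) := by
              intro i; congr 1; simp [Fin.ext_iff]
            rw [Finset.prod_congr rfl fun i _ => this i]
            simp [Finset.prod_ite_eq]
          have h2 : (∏ i : Fin N, (1-p)^(if (i:ℕ) < j then q+1 else q)) = (1-p)^(k-1) := by
            rw [Finset.prod_pow_eq_pow_sum]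
            congr 1
            have : (∑ i : Fin N, (if (i:ℕ) < j then q+1 else q))
                = ∑ i : Fin N, (q + if (i:ℕ) < j then 1 else 0) := by
              apply Finset.sum_congr rfl; intro i _; split_ifs <;> omega
            rw [this, Finset.sum_add_distrib, Finset.sum_const, Finset.card_univ, Fintype.card_fin,
              smul_eq_mul]
            have hsum : (∑ i : Fin N, (if (i:ℕ) < j then 1 else 0)) = j := by
              rw [Fin.sum_univ_eq_sum_range (fun i => if i < j then 1 else 0) N]
              have hsub : (Finset.range N).filter (fun i => i < j) = Finset.range j := by
                ext x; simp only [Finset.mem_filter, Finset.mem_range]; omega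
              rw [← Finset.sum_filter, hsub, Finset.sum_const, Finset.card_range, smul_eq_mul,
                mul_one]
            rw [hsum]; omega
          rw [h1, h2]
      _ = ℙ {ω | σ ⟨0, hN⟩ ω = k} := (hgeom ⟨0, hN⟩ k hk).symm
end

section
/- Let τ¹,...,τ^N be i.i.d. pairs (τⁿ, Xⁿ) where τⁿ ~ Exp(λ), Xⁿ takes values in a measurable space E, and τⁿ is independent of Xⁿ. Let I₀ = argmin_n τⁿ (a.s. unique). Then the pair (N·min_n τⁿ, X^{I₀}) has the same joint law as (τ¹, X¹). -/
open MeasureTheory ProbabilityTheory Real Set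
open scoped ENNReal

section helpers
lemma exp_int {b : ℝ} (hb : 0 < b) (s : ℝ) :
    ∫ x in Ioi s, rexp (-(b * x)) = rexp (-(b * s)) / b := by
  have := integral_comp_mul_left_Ioi (fun x => rexp (-x)) s hb
  simp only [smul_eq_mul] at this
  rw [this, integral_exp_neg_Ioi]
  rw [div_eq_inv_mul]

lemma exp_law_eq {l : ℝ} (hl : 0 < l) (μ : Measure ℝ) [IsProbabilityMeasure μ]
    (h : ∀ t : ℝ, 0 ≤ t → μ (Ioi t) = ENNReal.ofReal (rexp (-l * t))) :
    μ = volume.withDensity (exponentialPDF l) := by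
  refine MeasureTheory.Measure.ext_of_Iic μ _ (fun a => ?_)
  have hIic : ∀ t : ℝ, μ (Iic t) = 1 - μ (Ioi t) := by
    intro t
    rw [← compl_Ioi, prob_compl_eq_one_sub measurableSet_Ioi]
  rw [hIic, (withDensity_apply _ measurableSet_Iic), lintegral_exponentialPDF_eq_antiDeriv hl]
  by_cases ha : 0 ≤ a
  · rw [h a ha, if_pos ha, ENNReal.ofReal_sub _ (exp_pos _).le, ENNReal.ofReal_one, neg_mul]
  · rw [if_neg ha]
    have h1 : μ (Ioi a) = 1 := by
      refine le_antisymm prob_le_one ?_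
      have h0 : μ (Ioi 0) = 1 := by rw [h 0 le_rfl]; simp
      rw [← h0]
      exact measure_mono (Ioi_subset_Ioi (le_of_not_ge ha))
    simp [h1]

lemma exp_lint {l c s : ℝ} (hl : 0 < l) (hc : 0 ≤ c) (hs : 0 ≤ s) :
    ∫⁻ u in Ioi s, ENNReal.ofReal (rexp (-c * u)) ∂(volume.withDensity (exponentialPDF l))
      = ENNReal.ofReal (l / (l + c) * rexp (-(l + c) * s)) := by
  have hb : 0 < l + c := by linarith
  rw [restrict_withDensity measurableSet_Ioi,
    lintegral_withDensity_eq_lintegral_mul _ (by unfold exponentialPDF; exact (measurable_exponentialPDFReal l).ennreal_ofReal)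
      (by fun_prop)]
  have hcongr : ∀ u ∈ Ioi s,
      (exponentialPDF l * fun u => ENNReal.ofReal (rexp (-c * u))) u
        = ENNReal.ofReal (l * rexp (-(l + c) * u)) := by
    intro u hu
    have hu0 : 0 ≤ u := le_trans hs (le_of_lt hu)
    simp only [Pi.mul_apply, exponentialPDF_of_nonneg hu0]
    rw [← ENNReal.ofReal_mul (by positivity)]
    congr 1
    rw [mul_assoc, ← Real.exp_add]
    congr 1
    ring_nf
  rw [setLIntegral_congr_fun measurableSet_Ioi hcongr]
  rw [← ofReal_integral_eq_lintegral_ofReal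
    (((exp_neg_integrableOn_Ioi s hb)).const_mul l)
    (ae_of_all _ (fun u => by positivity))]
  simp only [neg_mul]
  rw [integral_const_mul, exp_int hb s]
  congr 1
  field_simp
end helpers

/-- Parallel step of the parallel replica algorithm: for `N` i.i.d. pairs `(τ n, X n)` with
`τ n ~ Exp(l)` independent of the exit point `X n`, if `I₀` selects the (a.s. unique) index
of the replica with smallest exit time, then `(N · min_n τ n, X (I₀))` has the same joint
law as `(τ 1, X 1)`. -/
theorem parRep_parallel_step_exact
    {Ω : Type*} [MeasureSpace Ω] [IsProbabilityMeasure (ℙ : Measure Ω)]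
    {E : Type*} [MeasurableSpace E]
    (N : ℕ) (hN : 0 < N) (l : ℝ) (hl : 0 < l)
    (τ : Fin N → Ω → ℝ) (X : Fin N → Ω → E)
    (hτmeas : ∀ n, Measurable (τ n)) (hXmeas : ∀ n, Measurable (X n))
    -- the pairs (τ n, X n) are independent
    (hiid : iIndepFun (fun n ω => (τ n ω, X n ω)) ℙ)
    -- the pairs are identically distributed
    (hid : ∀ n, Measure.map (fun ω => (τ n ω, X n ω)) ℙ = Measure.map (fun ω => (τ ⟨0, hN⟩ ω, X ⟨0, hN⟩ ω)) ℙ)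
    -- each exit time is Exp(l)
    (hexp : ∀ n, ∀ t : ℝ, 0 ≤ t →
      ℙ {ω | t < τ n ω} = ENNReal.ofReal (Real.exp (-l * t)))
    -- within each pair, exit time and exit point are independent
    (hindep : ∀ n, IndepFun (τ n) (X n) ℙ)
    -- I₀ is a measurable selection of the argmin (a.s. unique)
    (I₀ : Ω → Fin N) (hI₀meas : Measurable I₀)
    (hI₀ : ∀ ω, τ (I₀ ω) ω = ⨅ n, τ n ω) :
    Measure.map (fun ω => ((N : ℝ) * ⨅ n, τ n ω, X (I₀ ω) ω)) ℙ
      = Measure.map (fun ω => (τ ⟨0, hN⟩ ω, X ⟨0, hN⟩ ω)) ℙ := by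
  classical
  set n0 : Fin N := ⟨0, hN⟩ with hn0
  have hNpos : (0:ℝ) < N := Nat.cast_pos.mpr hN
  have hgmeas : ∀ n : Fin N, Measurable (fun ω => (τ n ω, X n ω)) :=
    fun n => (hτmeas n).prodMk (hXmeas n)
  haveI hprobτ : ∀ n : Fin N, IsProbabilityMeasure (Measure.map (τ n) ℙ) :=
    fun n => Measure.isProbabilityMeasure_map (hτmeas n).aemeasurable
  haveI hprobX : ∀ n : Fin N, IsProbabilityMeasure (Measure.map (X n) ℙ) :=
    fun n => Measure.isProbabilityMeasure_map (hXmeas n).aemeasurable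
  -- identification of the exponential law
  have hμτ : ∀ n, Measure.map (τ n) ℙ = volume.withDensity (exponentialPDF l) := by
    intro n
    refine exp_law_eq hl _ (fun t ht => ?_)
    rw [Measure.map_apply (hτmeas n) measurableSet_Ioi]
    exact hexp n t ht
  -- survival function, extended to all reals
  have hsurv : ∀ n : Fin N, ∀ a : ℝ, ℙ (τ n ⁻¹' Ioi a) = ENNReal.ofReal (rexp (-l * max a 0)) := by
    intro n a
    rcases le_or_gt 0 a with h | h
    · rw [max_eq_left h]; exact hexp n a h
    · rw [max_eq_right h.le]
      have h0 : ℙ (τ n ⁻¹' Ioi 0) = 1 := by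
        have := hexp n 0 le_rfl; simp at this; exact this
      have h1 : ℙ (τ n ⁻¹' Ioi a) = 1 := by
        refine le_antisymm prob_le_one ?_
        rw [← h0]
        exact measure_mono (preimage_mono (Ioi_subset_Ioi h.le))
      simp [h1]
  -- the τ's are mutually independent
  have hτiid : iIndepFun τ ℙ :=
    hiid.comp (fun _ => Prod.fst) (fun _ => measurable_fst)
  -- measurability
  have hinf_meas : Measurable (fun ω => ⨅ n, τ n ω) := Measurable.iInf hτmeas
  have hY_meas : Measurable (fun ω => X (I₀ ω) ω) := by
    have h1 : Measurable (fun p : Ω × Fin N => X p.2 p.1) :=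
      measurable_from_prod_countable_left hXmeas
    exact h1.comp (measurable_id.prodMk hI₀meas)
  have hT_meas : Measurable (fun ω => ((N : ℝ) * ⨅ n, τ n ω, X (I₀ ω) ω)) :=
    (measurable_const.mul hinf_meas).prodMk hY_meas
  -- laws of the X n agree
  have hXlaw : ∀ n : Fin N, Measure.map (X n) ℙ = Measure.map (X n0) ℙ := by
    intro n
    have h1 : ∀ m : Fin N, Measure.map (X m) ℙ
        = Measure.map Prod.snd (Measure.map (fun ω => (τ m ω, X m ω)) ℙ) := by
      intro m
      rw [Measure.map_map measurable_snd (hgmeas m)]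
      rfl
    rw [h1 n, h1 n0, hid n]
  -- ties are null
  have hties : ∀ m n : Fin N, m ≠ n → ℙ {ω | τ m ω = τ n ω} = 0 := by
    intro m n hmn
    have hind : IndepFun (τ m) (τ n) ℙ :=
      (hiid.indepFun hmn).comp measurable_fst measurable_fst
    have hmap := (indepFun_iff_map_prod_eq_prod_map_map (hτmeas m).aemeasurable
      (hτmeas n).aemeasurable).mp hind
    have hset : MeasurableSet {p : ℝ × ℝ | p.1 = p.2} :=
      measurableSet_eq_fun measurable_fst measurable_snd
    have heq : ℙ {ω | τ m ω = τ n ω}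
        = (Measure.map (fun ω => (τ m ω, τ n ω)) ℙ) {p : ℝ × ℝ | p.1 = p.2} := by
      rw [Measure.map_apply ((hτmeas m).prodMk (hτmeas n)) hset]
      rfl
    rw [heq, hmap, Measure.prod_apply hset]
    have hz : ∀ u : ℝ, (Measure.map (τ n) ℙ) (Prod.mk u ⁻¹' {p : ℝ × ℝ | p.1 = p.2}) = 0 := by
      intro u
      have hs : (Prod.mk u ⁻¹' {p : ℝ × ℝ | p.1 = p.2}) = {u} := by
        ext v; simp [eq_comm]
      rw [hs, hμτ n]
      exact withDensity_absolutelyContinuous volume _ (measure_singleton u)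
    simp only [hz, lintegral_zero]
  -- main rectangle computation
  have hmain : ∀ (a : ℝ) (B : Set E), MeasurableSet B →
      ℙ ((fun ω => ((N : ℝ) * ⨅ n, τ n ω, X (I₀ ω) ω)) ⁻¹' (Ioi a ×ˢ B))
        = ENNReal.ofReal (rexp (-l * max a 0)) * ℙ (X n0 ⁻¹' B) := by
    intro a B hB
    set s' : ℝ := max (a / N) 0 with hs'def
    have hs'0 : 0 ≤ s' := le_max_right _ _
    set Ev : Set Ω := (fun ω => ((N : ℝ) * ⨅ n, τ n ω, X (I₀ ω) ω)) ⁻¹' (Ioi a ×ˢ B) with hEvdef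
    have hEvmeas : MeasurableSet Ev := hT_meas (measurableSet_Ioi.prod hB)
    have hEvmem : ∀ ω, ω ∈ Ev ↔ (a < (N : ℝ) * ⨅ m, τ m ω ∧ X (I₀ ω) ω ∈ B) := by
      intro ω; simp [hEvdef, Set.mem_prod]
    set En : Fin N → Set Ω := fun n =>
      ((fun ω => (N : ℝ) * τ n ω) ⁻¹' Ioi a) ∩ (X n ⁻¹' B)
        ∩ ⋂ (m : {m : Fin N // m ≠ n}), {ω | τ n ω < τ m.1 ω} with hEndef
    have hEnmeas : ∀ n, MeasurableSet (En n) := fun n =>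
      (((measurable_const.mul (hτmeas n)) measurableSet_Ioi).inter (hXmeas n hB)).inter
        (MeasurableSet.iInter fun m => measurableSet_lt (hτmeas n) (hτmeas m.1))
    have hEnmem : ∀ (n : Fin N) (ω : Ω), ω ∈ En n ↔
        (a < (N : ℝ) * τ n ω ∧ X n ω ∈ B ∧ ∀ m : Fin N, m ≠ n → τ n ω < τ m ω) := by
      intro n ω
      simp only [hEndef, Set.mem_inter_iff, Set.mem_preimage, mem_Ioi, Set.mem_iInter,
        Set.mem_setOf_eq, Subtype.forall]
      tauto
    -- decomposition over the argmin
    have hEvcup : Ev = ⋃ n, (Ev ∩ I₀ ⁻¹' {n}) := by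
      ext ω; simp
    have hdis : Pairwise (Function.onFun Disjoint fun n => Ev ∩ I₀ ⁻¹' {n}) := by
      intro m m' hmm'
      refine Set.disjoint_left.mpr ?_
      rintro ω ⟨-, h1⟩ ⟨-, h2⟩
      simp only [Set.mem_preimage, Set.mem_singleton_iff] at h1 h2
      exact hmm' (h1.symm.trans h2)
    have hsum : ℙ Ev = ∑ n : Fin N, ℙ (Ev ∩ I₀ ⁻¹' {n}) := by
      conv_lhs => rw [hEvcup]
      rw [measure_iUnion hdis
        (fun n => hEvmeas.inter (hI₀meas (measurableSet_singleton n))), tsum_fintype]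
    -- ties are a.e. absent
    set D : Set Ω := ⋃ (m : Fin N) (m' : Fin N) (_ : m ≠ m'), {ω | τ m ω = τ m' ω} with hDdef
    have hD : ℙ D = 0 :=
      measure_iUnion_null fun m => measure_iUnion_null fun m' =>
        measure_iUnion_null fun h => hties m m' h
    have hDae : ∀ᵐ ω ∂ℙ, ω ∉ D := by
      rw [ae_iff]; simpa using hD
    have hinf_le : ∀ (ω : Ω) (m : Fin N), (⨅ k, τ k ω) ≤ τ m ω := fun ω m =>
      ciInf_le (Set.finite_range _).bddBelow m
    have hfib : ∀ n : Fin N, ℙ (Ev ∩ I₀ ⁻¹' {n}) = ℙ (En n) := by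
      intro n
      refine measure_congr (Filter.eventuallyEq_set.2 (hDae.mono fun ω hωD => ?_))
      have hne : ∀ m m' : Fin N, m ≠ m' → τ m ω ≠ τ m' ω := fun m m' h hc =>
        hωD (Set.mem_iUnion.2 ⟨m, Set.mem_iUnion.2 ⟨m', Set.mem_iUnion.2 ⟨h, hc⟩⟩⟩)
      rw [hEnmem n ω]
      constructor
      · rintro ⟨hEvω, hI⟩
        simp only [Set.mem_preimage, Set.mem_singleton_iff] at hI
        have hinfn : (⨅ k, τ k ω) = τ n ω := by rw [← hI]; exact (hI₀ ω).symm
        obtain ⟨h1, h2⟩ := (hEvmem ω).1 hEvω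
        rw [hinfn] at h1
        rw [hI] at h2
        refine ⟨h1, h2, fun m hm => ?_⟩
        exact lt_of_le_of_ne (hinfn ▸ hinf_le ω m) (hne n m (Ne.symm hm))
      · rintro ⟨h1, h2, h3⟩
        have hI : I₀ ω = n := by
          by_contra hc
          have h4 := h3 (I₀ ω) hc
          have h5 : τ (I₀ ω) ω ≤ τ n ω := (hI₀ ω).le.trans (hinf_le ω n)
          linarith
        have hinfn : (⨅ k, τ k ω) = τ n ω := by rw [← hI]; exact (hI₀ ω).symm
        refine ⟨(hEvmem ω).2 ⟨by rw [hinfn]; exact h1, by rw [hI]; exact h2⟩, ?_⟩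
        simp [hI]
    -- value of ℙ (En n)
    have hEnval : ∀ n : Fin N, ℙ (En n)
        = ENNReal.ofReal (1 / N * rexp (-((N : ℝ) * l) * s')) * ℙ (X n0 ⁻¹' B) := by
      intro n
      have hc1 : (0 : ℝ) ≤ ((N : ℝ) - 1) * l := by
        have : (1 : ℝ) ≤ N := by exact_mod_cast hN
        nlinarith
      set V : Ω → ({m : Fin N // m ≠ n} → ℝ) := fun ω m => τ m.1 ω with hVdef
      have hVmeas : Measurable V := measurable_pi_lambda _ fun m => hτmeas m.1
      haveI : IsProbabilityMeasure (Measure.map V ℙ) :=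
        Measure.isProbabilityMeasure_map hVmeas.aemeasurable
      -- independence of the pair (τ n, X n) and the other exit times
      have hpairV : IndepFun (fun ω => (τ n ω, X n ω)) V ℙ := by
        have h0 := hiid.indepFun_finset {n} {n}ᶜ disjoint_compl_right hgmeas
        have hφ : Measurable (fun v : ({n} : Finset (Fin N)) → ℝ × E =>
            v ⟨n, Finset.mem_singleton_self n⟩) := measurable_pi_apply _
        have hψ : Measurable (fun v : ({n}ᶜ : Finset (Fin N)) → ℝ × E =>
            (fun m : {m : Fin N // m ≠ n} =>
              (v ⟨m.1, by simp [Finset.mem_compl, m.2]⟩).1)) :=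
          measurable_pi_lambda _ fun m => measurable_fst.comp (measurable_pi_apply _)
        exact h0.comp hφ hψ
      -- joint law of ((τ n, X n), V)
      have hmapZ : Measure.map (fun ω => ((τ n ω, X n ω), V ω)) ℙ
          = ((Measure.map (τ n) ℙ).prod (Measure.map (X n) ℙ)).prod (Measure.map V ℙ) := by
        have h1 := (indepFun_iff_map_prod_eq_prod_map_map (hgmeas n).aemeasurable
          hVmeas.aemeasurable).mp hpairV
        have h2 := (indepFun_iff_map_prod_eq_prod_map_map (hτmeas n).aemeasurable
          (hXmeas n).aemeasurable).mp (hindep n)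
        rw [h1, h2]
      -- survival function of V
      have hVsurv : ∀ u : ℝ, 0 ≤ u →
          Measure.map V ℙ {v : {m : Fin N // m ≠ n} → ℝ | ∀ m, u < v m}
            = ENNReal.ofReal (rexp (-(((N : ℝ) - 1) * l) * u)) := by
        intro u hu
        have hsetm : MeasurableSet {v : {m : Fin N // m ≠ n} → ℝ | ∀ m, u < v m} := by
          have hs : {v : {m : Fin N // m ≠ n} → ℝ | ∀ m, u < v m}
              = Set.pi univ (fun _ => Ioi u) := by
            ext v; simp [Set.mem_pi]
          rw [hs]; exact MeasurableSet.univ_pi fun _ => measurableSet_Ioi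
        rw [Measure.map_apply hVmeas hsetm]
        have hpre : V ⁻¹' {v : {m : Fin N // m ≠ n} → ℝ | ∀ m, u < v m}
            = ⋂ m ∈ ({n}ᶜ : Finset (Fin N)), τ m ⁻¹' Ioi u := by
          ext ω
          simp [hVdef, Finset.mem_compl, Finset.mem_singleton, Subtype.forall]
        rw [hpre, (iIndepFun_iff_measure_inter_preimage_eq_mul.mp hτiid) ({n}ᶜ)
          (sets := fun _ => Ioi u) (fun _ _ => measurableSet_Ioi)]
        have hfactor : ∀ m ∈ ({n}ᶜ : Finset (Fin N)),
            ℙ (τ m ⁻¹' Ioi u) = ENNReal.ofReal (rexp (-l * u)) :=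
          fun m _ => hexp m u hu
        rw [Finset.prod_congr rfl hfactor, Finset.prod_const]
        have hcard : ({n}ᶜ : Finset (Fin N)).card = N - 1 := by
          rw [Finset.card_compl, Finset.card_singleton, Fintype.card_fin]
        rw [hcard, ← ENNReal.ofReal_pow (exp_nonneg _), ← Real.exp_nat_mul]
        congr 1
        have : ((N - 1 : ℕ) : ℝ) = (N : ℝ) - 1 := by
          push_cast [Nat.cast_sub hN]
          ring
        rw [this]
        ring
      -- express ℙ (En n) through the joint law
      have hZmeas : Measurable (fun ω => ((τ n ω, X n ω), V ω)) := (hgmeas n).prodMk hVmeas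
      set S : Set ((ℝ × E) × ({m : Fin N // m ≠ n} → ℝ)) :=
        (Prod.fst ⁻¹' ({p : ℝ × E | a < (N : ℝ) * p.1} ∩ (Prod.snd ⁻¹' B)))
          ∩ ⋂ m : {m : Fin N // m ≠ n},
              {q : (ℝ × E) × ({m : Fin N // m ≠ n} → ℝ) | q.1.1 < q.2 m} with hSdef
      have hSmeas : MeasurableSet S :=
        (measurable_fst ((measurableSet_lt measurable_const
            (measurable_const.mul measurable_fst)).inter (measurable_snd hB))).inter
          (MeasurableSet.iInter fun m => measurableSet_lt (measurable_fst.comp measurable_fst)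
            ((measurable_pi_apply m).comp measurable_snd))
      have hZS : En n = (fun ω => ((τ n ω, X n ω), V ω)) ⁻¹' S := by
        ext ω
        simp [hEndef, hSdef, hVdef]
      have h5 : ℙ (En n)
          = (((Measure.map (τ n) ℙ).prod (Measure.map (X n) ℙ)).prod (Measure.map V ℙ)) S := by
        rw [hZS, ← Measure.map_apply hZmeas hSmeas, hmapZ]
      rw [h5, Measure.prod_apply hSmeas]
      -- value of the slices
      have hslice : ∀ p : ℝ × E, 0 < p.1 →
          Measure.map V ℙ (Prod.mk p ⁻¹' S)
            = (Ioi s').indicator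
                (fun u => ENNReal.ofReal (rexp (-(((N : ℝ) - 1) * l) * u))) p.1
              * B.indicator (1 : E → ℝ≥0∞) p.2 := by
        intro p hp
        by_cases h1 : a < (N : ℝ) * p.1 ∧ p.2 ∈ B
        · have hpre : Prod.mk p ⁻¹' S = {v : {m : Fin N // m ≠ n} → ℝ | ∀ m, p.1 < v m} := by
            ext v
            simp [hSdef, h1.1, h1.2]
          rw [hpre, hVsurv p.1 hp.le]
          have hmem : p.1 ∈ Ioi s' := by
            rw [hs'def]
            simp only [mem_Ioi, max_lt_iff]
            exact ⟨(div_lt_iff₀ hNpos).mpr (by linarith [h1.1]), hp⟩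
          rw [Set.indicator_of_mem hmem, Set.indicator_of_mem h1.2, Pi.one_apply, mul_one]
        · have hpre : Prod.mk p ⁻¹' S = ∅ := by
            ext v
            simp only [hSdef, Set.mem_preimage, Set.mem_inter_iff, Set.mem_setOf_eq,
              Set.mem_iInter, Set.mem_empty_iff_false, iff_false, not_and]
            intro h2
            exact absurd ⟨h2.1, h2.2⟩ h1
          rw [hpre, measure_empty]
          rcases not_and_or.mp h1 with h2 | h2
          · have hnm : p.1 ∉ Ioi s' := by
              simp only [mem_Ioi, hs'def, not_lt, le_max_iff]
              left
              rw [le_div_iff₀ hNpos]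
              linarith [not_lt.mp h2]
            rw [Set.indicator_of_notMem hnm, zero_mul]
          · rw [Set.indicator_of_notMem h2, mul_zero]
      -- a.e. the first coordinate is positive
      have hpos : ∀ᵐ p ∂((Measure.map (τ n) ℙ).prod (Measure.map (X n) ℙ)), 0 < p.1 := by
        rw [ae_iff]
        have hset : {p : ℝ × E | ¬ 0 < p.1} = (Iic 0) ×ˢ (univ : Set E) := by
          ext p; simp [not_lt]
        rw [hset, Measure.prod_prod]
        have hIic : (Measure.map (τ n) ℙ) (Iic 0) = 0 := by
          have h0 : (Measure.map (τ n) ℙ) (Ioi 0) = 1 := by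
            rw [Measure.map_apply (hτmeas n) measurableSet_Ioi]
            have := hexp n 0 le_rfl
            simp at this; exact this
          rw [← compl_Ioi, prob_compl_eq_one_sub measurableSet_Ioi, h0, tsub_self]
        rw [hIic, zero_mul]
      rw [lintegral_congr_ae (hpos.mono fun p hp => hslice p hp)]
      rw [lintegral_prod_mul
        (f := (Ioi s').indicator (fun u => ENNReal.ofReal (rexp (-(((N : ℝ) - 1) * l) * u))))
        (g := B.indicator (1 : E → ℝ≥0∞))
        (((by fun_prop : Measurable fun u : ℝ =>
            ENNReal.ofReal (rexp (-(((N : ℝ) - 1) * l) * u))).indicator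
          measurableSet_Ioi).aemeasurable)
        ((measurable_one.indicator hB).aemeasurable)]
      rw [lintegral_indicator_one hB, lintegral_indicator measurableSet_Ioi, hμτ n,
        exp_lint hl hc1 hs'0, hXlaw n, Measure.map_apply (hXmeas n0) hB]
      congr 2
      have he1 : l + ((N : ℝ) - 1) * l = (N : ℝ) * l := by ring
      rw [he1]
      congr 1
      rw [eq_div_iff hNpos.ne']
      field_simp
    -- conclusion
    rw [hsum]
    have hstep : ∀ n : Fin N, ℙ (Ev ∩ I₀ ⁻¹' {n})
        = ENNReal.ofReal (1 / N * rexp (-((N : ℝ) * l) * s')) * ℙ (X n0 ⁻¹' B) :=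
      fun n => (hfib n).trans (hEnval n)
    rw [Finset.sum_congr rfl (fun n _ => hstep n), Finset.sum_const, Finset.card_univ,
      Fintype.card_fin, nsmul_eq_mul, ← mul_assoc]
    congr 1
    rw [← ENNReal.ofReal_natCast, ← ENNReal.ofReal_mul (by positivity)]
    congr 1
    have hNs' : (N : ℝ) * s' = max a 0 := by
      rw [hs'def, mul_max_of_nonneg _ _ hNpos.le, mul_div_cancel₀ _ hNpos.ne', mul_zero]
    have hexpeq : rexp (-((N : ℝ) * l) * s') = rexp (-l * max a 0) := by
      congr 1
      rw [← hNs']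
      ring
    rw [hexpeq, ← mul_assoc, mul_one_div, div_self hNpos.ne', one_mul]
  -- reduce the equality of laws to rectangles
  haveI hP1 : IsProbabilityMeasure
      (Measure.map (fun ω => ((N : ℝ) * ⨅ n, τ n ω, X (I₀ ω) ω)) ℙ) :=
    Measure.isProbabilityMeasure_map hT_meas.aemeasurable
  haveI hP2 : IsProbabilityMeasure (Measure.map (fun ω => (τ n0 ω, X n0 ω)) ℙ) :=
    Measure.isProbabilityMeasure_map (hgmeas n0).aemeasurable
  have hspanR : IsCountablySpanning (range (Ioi : ℝ → Set ℝ)) := by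
    refine ⟨fun n => Ioi (-(n : ℝ)), fun n => ⟨-(n : ℝ), rfl⟩, ?_⟩
    ext x
    simp only [mem_iUnion, mem_Ioi, mem_univ, iff_true]
    obtain ⟨n, hn⟩ := exists_nat_gt (-x)
    exact ⟨n, by linarith⟩
  have hspanE : IsCountablySpanning {s : Set E | MeasurableSet s} :=
    ⟨fun _ => univ, fun _ => MeasurableSet.univ, iUnion_const _⟩
  have hgen : (inferInstance : MeasurableSpace (ℝ × E)) =
      MeasurableSpace.generateFrom
        (image2 (· ×ˢ ·) (range (Ioi : ℝ → Set ℝ)) {s : Set E | MeasurableSet s}) := by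
    have h1 : (inferInstance : MeasurableSpace ℝ)
        = MeasurableSpace.generateFrom (range (Ioi : ℝ → Set ℝ)) := by
      rw [BorelSpace.measurable_eq (α := ℝ), borel_eq_generateFrom_Ioi]
    have h2 : (inferInstance : MeasurableSpace E)
        = MeasurableSpace.generateFrom {s : Set E | MeasurableSet s} :=
      MeasurableSpace.generateFrom_measurableSet.symm
    have h3 := generateFrom_prod_eq hspanR hspanE
    rw [← h1, ← h2] at h3
    exact h3
  have hpi : IsPiSystem (image2 (· ×ˢ ·) (range (Ioi : ℝ → Set ℝ)) {s : Set E | MeasurableSet s}) :=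
    IsPiSystem.prod isPiSystem_Ioi (fun s hs t ht _ => hs.inter ht)
  refine ext_of_generate_finite _ hgen hpi (fun s hs => ?_) (by simp)
  obtain ⟨Io, hIo, B, hB, rfl⟩ := hs
  obtain ⟨a, rfl⟩ := hIo
  have hBmeas : MeasurableSet B := hB
  have hrect : MeasurableSet ((Ioi a) ×ˢ B) := measurableSet_Ioi.prod hBmeas
  rw [Measure.map_apply hT_meas hrect, Measure.map_apply (hgmeas n0) hrect, hmain a B hBmeas]
  have hpre : (fun ω => (τ n0 ω, X n0 ω)) ⁻¹' (Ioi a ×ˢ B)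
      = (τ n0 ⁻¹' Ioi a) ∩ (X n0 ⁻¹' B) := by
    ext ω; simp [Set.mem_prod]
  rw [hpre, (hindep n0).measure_inter_preimage_eq_mul _ _ measurableSet_Ioi hBmeas, hsurv n0 a]
end
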